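/- arXiv:2602.06014 — 3 statements merged into one kernel-verified Lean document; each statement's English description precedes it below -/
import Mathlib

section
/- Let r ≥ 3 and let x lie in the interior of the simplex Δ_r. Then the winner map g satisfies strict negative-feedback monotonicity: for any distinct indices i ≠ j, if x_i > x_j then g_i(x) < g_j(x). -/
open MeasureTheory ProbabilityTheory Filter Real Topology

open scoped Classical

namespace ThompsonStability

variable {Ω : Type} [MeasurableSpace Ω]

/-- The standard normal cumulative distribution function `Φ`. -/
noncomputable def gaussCDF (x : ℝ) : ℝ := ((gaussianReal 0 1) (Set.Iic x)).toReal

/-- `pullCount A a t ω` is the number of pulls `N_{a,t}` of arm `a` during rounds `1,…,t`. -/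
def pullCount {K : ℕ} (A : ℕ → Ω → Fin K) (a : Fin K) (t : ℕ) (ω : Ω) : ℕ :=
  ((Finset.Icc 1 t).filter fun s => A s ω = a).card

/-- `pullTime A a k ω` is the time `T_a(k)` of the `k`-th pull of arm `a`. -/
noncomputable def pullTime {K : ℕ} (A : ℕ → Ω → Fin K) (a : Fin K) (k : ℕ) (ω : Ω) : ℕ :=
  sInf {t | k ≤ pullCount A a t ω}

/-- The reward process `R_{a,t} = μ_a + Z_{a,t}`, where the noise `Z_{a,t}` is the
coordinate `W (t, a, false)` of the ambient i.i.d. standard Gaussian family `W`. -/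
def reward {K : ℕ} (μ : Fin K → ℝ) (W : ℕ × Fin K × Bool → Ω → ℝ)
    (t : ℕ) (a : Fin K) (ω : Ω) : ℝ := μ a + W (t, a, false) ω

/-- The empirical mean `μ̂_{a,t}` of arm `a` after `t` rounds. -/
noncomputable def empMean {K : ℕ} (A : ℕ → Ω → Fin K) (R : ℕ → Fin K → Ω → ℝ)
    (a : Fin K) (t : ℕ) (ω : Ω) : ℝ :=
  (∑ s ∈ (Finset.Icc 1 t).filter fun s => A s ω = a, R s a ω) / (pullCount A a t ω : ℝ)

/-- The sample standard deviation `σ̂_{a,t}` of the rewards of arm `a` up to time `t`,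
with the convention that it equals `1` when `N_{a,t} ≤ 1`. -/
noncomputable def sampleSD {K : ℕ} (A : ℕ → Ω → Fin K) (R : ℕ → Fin K → Ω → ℝ)
    (a : Fin K) (t : ℕ) (ω : Ω) : ℝ :=
  if pullCount A a t ω ≤ 1 then 1
  else Real.sqrt ((∑ s ∈ (Finset.Icc 1 t).filter fun s => A s ω = a,
    (R s a ω - empMean A R a t ω) ^ 2) / ((pullCount A a t ω : ℝ) - 1))

/-- The history σ-algebra `F_t`, generated by `(A_1, R_{A_1,1}, …, A_t, R_{A_t,t})`. -/
def histSigma {K : ℕ} (A : ℕ → Ω → Fin K) (R : ℕ → Fin K → Ω → ℝ) (t : ℕ) :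
    MeasurableSpace Ω :=
  MeasurableSpace.comap
    (fun ω (s : Fin t) => (A ((s : ℕ) + 1) ω, R ((s : ℕ) + 1) (A ((s : ℕ) + 1) ω) ω))
    inferInstance

/-- The Thompson sample (index) `θ_{a,t+1} = μ̂_{a,t} + √(σ(𝒜)/N_{a,t}) ζ_{a,t+1}` used by
variance-inflated Thompson sampling, where `ζ_{a,t+1} = W (t+1, a, true)` is a fresh
standard Gaussian draw, so that `θ_{a,t+1} | F_t ~ N(μ̂_{a,t}, σ(𝒜)/N_{a,t})`,
independently across arms. -/
noncomputable def tsIndex {K : ℕ} (μ : Fin K → ℝ) (W : ℕ × Fin K × Bool → Ω → ℝ)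
    (σA : ℝ) (A : ℕ → Ω → Fin K) (t : ℕ) (a : Fin K) (ω : Ω) : ℝ :=
  empMean A (reward μ W) a t ω +
    Real.sqrt (σA / (pullCount A a t ω : ℝ)) * W (t + 1, a, true) ω

/-- The index `Υ_{a,t+1} = μ̂_{a,t} + ζ_{a,t+1}/√N_{a,t} + √(2 β(𝒜) log T / N_{a,t})` used by
Thompson sampling with mean bonus (the posterior sample `θ̃_{a,t+1}` plus the bonus
`B_{a,t}`), where `ζ_{a,t+1} = W (t+1, a, true)` is a fresh standard Gaussian draw. -/
noncomputable def mbIndex {K : ℕ} (μ : Fin K → ℝ) (W : ℕ × Fin K × Bool → Ω → ℝ)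
    (βA : ℝ) (T : ℕ) (A : ℕ → Ω → Fin K) (t : ℕ) (a : Fin K) (ω : Ω) : ℝ :=
  empMean A (reward μ W) a t ω + W (t + 1, a, true) ω / Real.sqrt (pullCount A a t ω : ℝ) +
    Real.sqrt (2 * βA * Real.log T / (pullCount A a t ω : ℝ))

/-- A run of variance-inflated Thompson sampling with inflation factor `σA` on the `K`-armed
Gaussian bandit with means `μ`: `W` is an i.i.d. family of standard Gaussians furnishing both
the reward noise (`… false`) and the posterior sampling randomness (`… true`); each arm is
pulled once during the initialization rounds `1,…,K`; and for every `t ≥ K` the next arm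
`A_{t+1}` is measurable with respect to the history `F_t` together with the fresh draws
`ζ_{·,t+1}`, and maximizes the Thompson index `θ_{·,t+1}`. -/
structure VarInflTS (K : ℕ) (P : Measure Ω) (μ : Fin K → ℝ) (σA : ℝ)
    (A : ℕ → Ω → Fin K) (W : ℕ × Fin K × Bool → Ω → ℝ) : Prop where
  meas_A : ∀ t, Measurable (A t)
  meas_W : ∀ i, Measurable (W i)
  indep_W : iIndepFun W P
  gauss_W : ∀ i, Measure.map (W i) P = gaussianReal 0 1
  init : ∀ ω (a : Fin K), pullCount A a K ω = 1
  adapted : ∀ t, K ≤ t →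
    Measurable[histSigma A (reward μ W) t ⊔
      MeasurableSpace.comap (fun ω (a : Fin K) => W (t + 1, a, true) ω) inferInstance]
      (A (t + 1))
  argmax : ∀ t, K ≤ t → ∀ ω (a : Fin K),
    tsIndex μ W σA A t a ω ≤ tsIndex μ W σA A t (A (t + 1) ω) ω

/-- A run (with horizon `T`) of Thompson sampling with mean bonus, with bonus strength `βA`,
on the `K`-armed Gaussian bandit with means `μ`; fields as in `VarInflTS`, with the selected
arm maximizing the bonus-shifted index `Υ_{·,t+1}`. -/
structure MeanBonusTS (K : ℕ) (P : Measure Ω) (μ : Fin K → ℝ) (βA : ℝ) (T : ℕ)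
    (A : ℕ → Ω → Fin K) (W : ℕ × Fin K × Bool → Ω → ℝ) : Prop where
  meas_A : ∀ t, Measurable (A t)
  meas_W : ∀ i, Measurable (W i)
  indep_W : iIndepFun W P
  gauss_W : ∀ i, Measure.map (W i) P = gaussianReal 0 1
  init : ∀ ω (a : Fin K), pullCount A a K ω = 1
  adapted : ∀ t, K ≤ t →
    Measurable[histSigma A (reward μ W) t ⊔
      MeasurableSpace.comap (fun ω (a : Fin K) => W (t + 1, a, true) ω) inferInstance]
      (A (t + 1))
  argmax : ∀ t, K ≤ t → ∀ ω (a : Fin K),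
    mbIndex μ W βA T A t a ω ≤ mbIndex μ W βA T A t (A (t + 1) ω) ω

/-- The concentration event `E_T`:
`|μ̂_{a,t} − μ_a| ≤ √(C log log T / N_{a,t})` for all (post-initialization) `t ≤ T` and `a`. -/
def concEvent {K : ℕ} (μ : Fin K → ℝ) (A : ℕ → Ω → Fin K) (W : ℕ × Fin K × Bool → Ω → ℝ)
    (Cc : ℝ) (T : ℕ) : Set Ω :=
  {ω | ∀ a : Fin K, ∀ t, K ≤ t → t ≤ T →
    |empMean A (reward μ W) a t ω - μ a| ≤
      Real.sqrt (Cc * Real.log (Real.log T) / (pullCount A a t ω : ℝ))}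

/-- The few-suboptimal-pulls event `Ω_T = {N_sub(T) ≤ σ(𝒜) log T log log T}`. -/
def fewSubEvent {K : ℕ} (μ : Fin K → ℝ) (μstar : ℝ) (A : ℕ → Ω → Fin K)
    (σA : ℝ) (T : ℕ) : Set Ω :=
  {ω | ∑ b ∈ Finset.univ.filter (fun b : Fin K => μ b ≠ μstar), (pullCount A b T ω : ℝ) ≤
    σA * Real.log T * Real.log (Real.log T)}

/-- The good event `G_T = G_{T,1} ∩ G_{T,2}` for Thompson sampling with mean bonus:
`G_{T,1}` is mean concentration at scale `√(C₁ log T / N_{a,t})`, and `G_{T,2}` bounds all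
the standard normal draws used by the algorithm by `√(2 log (2 K T³))`. -/
def goodEvent {K : ℕ} (μ : Fin K → ℝ) (A : ℕ → Ω → Fin K) (W : ℕ × Fin K × Bool → Ω → ℝ)
    (C₁ : ℝ) (T : ℕ) : Set Ω :=
  {ω | (∀ a : Fin K, ∀ t, K ≤ t → t ≤ T →
      |empMean A (reward μ W) a t ω - μ a| ≤
        Real.sqrt (C₁ * Real.log T / (pullCount A a t ω : ℝ))) ∧
    (∀ a : Fin K, ∀ t ≤ T, |W (t, a, true) ω| ≤ Real.sqrt (2 * Real.log (2 * K * T ^ 3)))}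


lemma gaussianReal_pos_of_volume_pos {s : Set ℝ} (hs : volume s ≠ 0) :
    0 < gaussianReal 0 1 s := by
  by_contra h
  push_neg at h
  exact hs (gaussianReal_absolutelyContinuous' 0 one_ne_zero
    (le_antisymm h zero_le))

lemma gaussCDF_nonneg (c : ℝ) : 0 ≤ gaussCDF c := ENNReal.toReal_nonneg

lemma gaussCDF_le_one (c : ℝ) : gaussCDF c ≤ 1 := by
  have h : gaussianReal 0 1 (Set.Iic c) ≤ 1 := prob_le_one
  simpa [gaussCDF] using ENNReal.toReal_mono ENNReal.one_ne_top h

lemma gaussCDF_pos (c : ℝ) : 0 < gaussCDF c := by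
  have h := gaussianReal_pos_of_volume_pos (s := Set.Iic c) (by simp)
  exact ENNReal.toReal_pos h.ne' (measure_ne_top _ _)

lemma gaussCDF_strictMono : StrictMono gaussCDF := by
  intro c d h
  have hB : 0 < gaussianReal 0 1 (Set.Ioc c d) := by
    refine gaussianReal_pos_of_volume_pos ?_
    rw [Real.volume_Ioc]
    simp [ENNReal.ofReal_eq_zero, not_le, sub_pos, h]
  have key : gaussianReal 0 1 (Set.Iic d)
      = gaussianReal 0 1 (Set.Iic c) + gaussianReal 0 1 (Set.Ioc c d) := by
    rw [← measure_union (Set.Iic_disjoint_Ioc le_rfl) measurableSet_Ioc,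
      Set.Iic_union_Ioc_eq_Iic h.le]
  have h2 := ENNReal.toReal_pos hB.ne' (measure_ne_top _ _)
  unfold gaussCDF
  rw [key, ENNReal.toReal_add (measure_ne_top _ _) (measure_ne_top _ _)]
  linarith

lemma gaussCDF_mono : Monotone gaussCDF := gaussCDF_strictMono.monotone

lemma measurable_gaussCDF : Measurable gaussCDF := gaussCDF_mono.measurable

lemma gaussianReal_map_neg :
    (gaussianReal 0 1).map (fun x : ℝ => -x) = gaussianReal 0 1 := by
  have h := gaussianReal_map_const_mul (μ := 0) (v := 1) (-1 : ℝ)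
  have h2 : (fun x : ℝ => -1 * x) = (fun x : ℝ => -x) := by funext x; ring
  have h3 : (⟨(-1:ℝ)^2, sq_nonneg _⟩ : NNReal) = 1 := by ext; norm_num
  rw [h2] at h
  rw [h]
  congr 1
  · simp
  · ext; norm_num

lemma gaussCDF_neg (c : ℝ) : gaussCDF (-c) = 1 - gaussCDF c := by
  have h1 : gaussianReal 0 1 (Set.Iic (-c)) = gaussianReal 0 1 (Set.Ici c) := by
    conv_lhs => rw [← gaussianReal_map_neg]
    rw [Measure.map_apply measurable_neg measurableSet_Iic]
    congr 1
    ext x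
    simp [neg_le_neg_iff]
  have hsing : gaussianReal 0 1 {c} = 0 :=
    gaussianReal_absolutelyContinuous 0 one_ne_zero Real.volume_singleton
  have h3 : gaussianReal 0 1 (Set.Iic c) = gaussianReal 0 1 (Set.Iio c) := by
    refine le_antisymm ?_ (measure_mono Set.Iio_subset_Iic_self)
    rw [← Set.Iio_union_right]
    refine (measure_union_le _ _).trans ?_
    rw [hsing, add_zero]
  have h2 : gaussianReal 0 1 (Set.Ici c) = 1 - gaussianReal 0 1 (Set.Iic c) := by
    rw [← Set.compl_Iio, measure_compl measurableSet_Iio (measure_ne_top _ _),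
      measure_univ, h3]
  unfold gaussCDF
  rw [h1, h2, ENNReal.toReal_sub_of_le prob_le_one ENNReal.one_ne_top, ENNReal.toReal_one]

lemma gaussCDF_zero : gaussCDF 0 = 1/2 := by
  have := gaussCDF_neg 0
  rw [neg_zero] at this
  linarith

lemma half_le_gaussCDF {c : ℝ} (hc : 0 ≤ c) : 1/2 ≤ gaussCDF c := by
  rw [← gaussCDF_zero]; exact gaussCDF_mono hc

lemma half_lt_gaussCDF {c : ℝ} (hc : 0 < c) : 1/2 < gaussCDF c := by
  rw [← gaussCDF_zero]; exact gaussCDF_strictMono hc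

/-- Key combinatorial inequality: `∏ p + ∏ (1-p)` is coordinatewise monotone on `[1/2, 1]`. -/
lemma prod_add_prod_one_sub_mono {ι : Type*} (S : Finset ι) (p q : ι → ℝ)
    (hq : ∀ k ∈ S, 1/2 ≤ q k) (hpq : ∀ k ∈ S, q k ≤ p k) (hp : ∀ k ∈ S, p k ≤ 1) :
    (∏ k ∈ S, q k) + ∏ k ∈ S, (1 - q k) ≤ (∏ k ∈ S, p k) + ∏ k ∈ S, (1 - p k) := by
  classical
  induction S using Finset.induction_on with
  | empty => simp
  | @insert a s ha ih =>
    have hmem : ∀ k ∈ s, k ∈ insert a s := fun k hk => Finset.mem_insert_of_mem hk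
    have IH := ih (fun k hk => hq k (hmem k hk)) (fun k hk => hpq k (hmem k hk))
      (fun k hk => hp k (hmem k hk))
    rw [Finset.prod_insert ha, Finset.prod_insert ha, Finset.prod_insert ha,
      Finset.prod_insert ha]
    set Q := ∏ k ∈ s, q k
    set Q' := ∏ k ∈ s, (1 - q k)
    set P := ∏ k ∈ s, p k
    set P' := ∏ k ∈ s, (1 - p k)
    have hqa := hq a (Finset.mem_insert_self a s)
    have hpqa := hpq a (Finset.mem_insert_self a s)
    have hpa := hp a (Finset.mem_insert_self a s)
    have hQnn : 0 ≤ Q := Finset.prod_nonneg fun k hk => by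
      have := hq k (hmem k hk); linarith
    have hQP : Q ≤ P := Finset.prod_le_prod (fun k hk => by
        have := hq k (hmem k hk); linarith)
      (fun k hk => hpq k (hmem k hk))
    have hP'nn : 0 ≤ P' := Finset.prod_nonneg fun k hk => by
      have := hp k (hmem k hk); linarith
    have hP'P : P' ≤ P := Finset.prod_le_prod (fun k hk => by
        have := hp k (hmem k hk); linarith)
      (fun k hk => by
        have h1 := hq k (hmem k hk); have h2 := hpq k (hmem k hk); linarith)
    nlinarith [mul_nonneg (show (0:ℝ) ≤ 1 - q a by linarith)
        (show (0:ℝ) ≤ (P + P') - (Q + Q') by linarith),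
      mul_nonneg (show (0:ℝ) ≤ 2 * q a - 1 by linarith)
        (show (0:ℝ) ≤ P - Q by linarith),
      mul_nonneg (show (0:ℝ) ≤ p a - q a by linarith)
        (show (0:ℝ) ≤ P - P' by linarith)]


lemma gaussCDF_lt_one (c : ℝ) : gaussCDF c < 1 := by
  have h := gaussCDF_neg c
  have h2 := gaussCDF_pos (-c)
  linarith

lemma abstract_ineq {l₁ l₂ h1 h2 h1' h2' : ℝ}
    (hl : 1/2 < l₂) (hl12 : l₂ ≤ l₁) (hl1 : l₁ ≤ 1)
    (hh2h1 : h2 < h1) (hh1'h2' : h1' < h2') (h1'nn : 0 ≤ h1') (hh1'h1 : h1' ≤ h1)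
    (hsum : h2 + h2' ≤ h1 + h1') :
    l₂ * h2 + (1 - l₂) * h2' < l₁ * h1 + (1 - l₁) * h1' := by
  nlinarith [mul_nonneg (show (0:ℝ) ≤ l₁ - l₂ by linarith)
      (show (0:ℝ) ≤ h1 - h1' by linarith),
    mul_pos (show (0:ℝ) < 2 * l₂ - 1 by linarith)
      (show (0:ℝ) < h2' - h1' by linarith),
    mul_nonneg (show (0:ℝ) ≤ l₂ by linarith)
      (show (0:ℝ) ≤ (h1 - h2) - (h2' - h1') by linarith)]

/-- Pointwise strict inequality after symmetrization, for `z > 0`. -/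
lemma pointwise_lt {ι : Type*} (S : Finset ι) (hS : S.Nonempty) (c : ι → ℝ)
    (hc : ∀ k ∈ S, 0 < c k) {a b z : ℝ} (hb : 0 < b) (hab : b < a) (hz : 0 < z) :
    gaussCDF (b * z / a) * ∏ k ∈ S, gaussCDF (c k * z / a)
      + gaussCDF (b * (-z) / a) * ∏ k ∈ S, gaussCDF (c k * (-z) / a)
    < gaussCDF (a * z / b) * ∏ k ∈ S, gaussCDF (c k * z / b)
      + gaussCDF (a * (-z) / b) * ∏ k ∈ S, gaussCDF (c k * (-z) / b) := by
  have ha : 0 < a := hb.trans hab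
  set t₁ := z / b with ht₁
  set t₂ := z / a with ht₂
  have ht₂pos : 0 < t₂ := div_pos hz ha
  have ht : t₂ < t₁ := div_lt_div_of_pos_left hz hb hab
  have ht₁pos : 0 < t₁ := ht₂pos.trans ht
  -- rewrite the four products
  have e2 : ∏ k ∈ S, gaussCDF (c k * z / a) = ∏ k ∈ S, gaussCDF (c k * t₂) :=
    Finset.prod_congr rfl fun k _ => by rw [ht₂, mul_div_assoc]
  have e1 : ∏ k ∈ S, gaussCDF (c k * z / b) = ∏ k ∈ S, gaussCDF (c k * t₁) :=
    Finset.prod_congr rfl fun k _ => by rw [ht₁, mul_div_assoc]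
  have e2' : ∏ k ∈ S, gaussCDF (c k * (-z) / a)
      = ∏ k ∈ S, (1 - gaussCDF (c k * t₂)) :=
    Finset.prod_congr rfl fun k _ => by
      rw [show c k * (-z) / a = -(c k * t₂) by rw [ht₂]; ring, gaussCDF_neg]
  have e1' : ∏ k ∈ S, gaussCDF (c k * (-z) / b)
      = ∏ k ∈ S, (1 - gaussCDF (c k * t₁)) :=
    Finset.prod_congr rfl fun k _ => by
      rw [show c k * (-z) / b = -(c k * t₁) by rw [ht₁]; ring, gaussCDF_neg]
  have f2 : gaussCDF (b * (-z) / a) = 1 - gaussCDF (b * z / a) := by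
    rw [show b * (-z) / a = -(b * z / a) by ring, gaussCDF_neg]
  have f1 : gaussCDF (a * (-z) / b) = 1 - gaussCDF (a * z / b) := by
    rw [show a * (-z) / b = -(a * z / b) by ring, gaussCDF_neg]
  rw [e1, e2, e1', e2', f1, f2]
  -- now apply the abstract inequality
  refine abstract_ineq ?_ ?_ (gaussCDF_le_one _) ?_ ?_ ?_ ?_ ?_
  · exact half_lt_gaussCDF (div_pos (mul_pos hb hz) ha)
  · refine gaussCDF_mono ?_
    rw [div_le_div_iff₀ ha hb]
    nlinarith [mul_nonneg (mul_nonneg hz.le (sub_nonneg.2 hab.le))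
      (by linarith : (0:ℝ) ≤ a + b)]
  · refine Finset.prod_lt_prod_of_nonempty (fun k hk => gaussCDF_pos _)
      (fun k hk => gaussCDF_strictMono (mul_lt_mul_of_pos_left ht (hc k hk))) hS
  · refine Finset.prod_lt_prod_of_nonempty
      (fun k hk => by linarith [gaussCDF_lt_one (c k * t₁)])
      (fun k hk => by
        have := gaussCDF_strictMono (mul_lt_mul_of_pos_left ht (hc k hk))
        linarith) hS
  · exact Finset.prod_nonneg fun k hk => by linarith [gaussCDF_le_one (c k * t₁)]
  · refine Finset.prod_le_prod (fun k hk => by linarith [gaussCDF_le_one (c k * t₁)])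
      (fun k hk => by
        have h12 : 1/2 ≤ gaussCDF (c k * t₁) :=
          half_le_gaussCDF (mul_nonneg (hc k hk).le ht₁pos.le)
        linarith)
  · exact prod_add_prod_one_sub_mono S _ _
      (fun k hk => half_le_gaussCDF (mul_nonneg (hc k hk).le ht₂pos.le))
      (fun k hk => gaussCDF_mono (mul_le_mul_of_nonneg_left ht.le (hc k hk).le))
      (fun k hk => gaussCDF_le_one _)


lemma integrable_of_bounded_meas {g : ℝ → ℝ} (hg : Measurable g) (C : ℝ)
    (hC : ∀ z, |g z| ≤ C) : Integrable g (gaussianReal 0 1) :=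
  ⟨hg.aestronglyMeasurable,
    HasFiniteIntegral.of_bounded (C := C) (ae_of_all _ fun z => hC z)⟩

/-- The core analytic inequality: comparison of winner integrals. -/
lemma core_lt {ι : Type*} (S : Finset ι) (hS : S.Nonempty) (c : ι → ℝ)
    (hc : ∀ k ∈ S, 0 < c k) {a b : ℝ} (hb : 0 < b) (hab : b < a) :
    ∫ z, gaussCDF (b * z / a) * ∏ k ∈ S, gaussCDF (c k * z / a) ∂(gaussianReal 0 1)
      < ∫ z, gaussCDF (a * z / b) * ∏ k ∈ S, gaussCDF (c k * z / b) ∂(gaussianReal 0 1) := by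
  have ha : 0 < a := hb.trans hab
  set γ := gaussianReal 0 1 with hγ
  set Gi : ℝ → ℝ := fun z => gaussCDF (b * z / a) * ∏ k ∈ S, gaussCDF (c k * z / a)
    with hGi
  set Gj : ℝ → ℝ := fun z => gaussCDF (a * z / b) * ∏ k ∈ S, gaussCDF (c k * z / b)
    with hGj
  have measG : ∀ (u v : ℝ), Measurable fun z : ℝ =>
      gaussCDF (u * z / v) * ∏ k ∈ S, gaussCDF (c k * z / v) := by
    intro u v
    refine Measurable.mul (measurable_gaussCDF.comp ?_) ?_
    · exact (measurable_id.const_mul u).div_const v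
    · refine Finset.measurable_prod _ fun k _ => measurable_gaussCDF.comp ?_
      exact (measurable_id.const_mul (c k)).div_const v
  have boundG : ∀ (u v z : ℝ), 0 ≤ gaussCDF (u * z / v) * ∏ k ∈ S, gaussCDF (c k * z / v)
      ∧ gaussCDF (u * z / v) * ∏ k ∈ S, gaussCDF (c k * z / v) ≤ 1 := by
    intro u v z
    have h1 : 0 ≤ ∏ k ∈ S, gaussCDF (c k * z / v) :=
      Finset.prod_nonneg fun k _ => gaussCDF_nonneg _
    have h2 : ∏ k ∈ S, gaussCDF (c k * z / v) ≤ 1 :=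
      Finset.prod_le_one (fun k _ => gaussCDF_nonneg _) (fun k _ => gaussCDF_le_one _)
    exact ⟨mul_nonneg (gaussCDF_nonneg _) h1,
      mul_le_one₀ (gaussCDF_le_one _) h1 h2⟩
  have hGimeas : Measurable Gi := measG b a
  have hGjmeas : Measurable Gj := measG a b
  have hGiint : Integrable Gi γ := integrable_of_bounded_meas hGimeas 1 (fun z => by
    have h := boundG b a z
    simp only [hGi]
    rw [abs_le]
    exact ⟨by linarith [h.1], h.2⟩)
  have hGjint : Integrable Gj γ := integrable_of_bounded_meas hGjmeas 1 (fun z => by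
    have h := boundG a b z
    simp only [hGj]
    rw [abs_le]
    exact ⟨by linarith [h.1], h.2⟩)
  set f : ℝ → ℝ := fun z => Gj z - Gi z with hf
  have hfmeas : Measurable f := hGjmeas.sub hGimeas
  have hfint : Integrable f γ := hGjint.sub hGiint
  have hfbound : ∀ z, |f z| ≤ 2 := by
    intro z
    have h1 := boundG b a z
    have h2 := boundG a b z
    rw [hf]
    rw [abs_le]
    constructor <;> simp only [hGi, hGj] <;> [linarith [h2.1, h1.2]; linarith [h2.2, h1.1]]
  have hfnegmeas : Measurable fun z => f (-z) := hfmeas.comp measurable_neg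
  have hfnegint : Integrable (fun z => f (-z)) γ :=
    integrable_of_bounded_meas hfnegmeas 2 (fun z => hfbound (-z))
  -- symmetry of the gaussian
  have hsym : ∫ z, f (-z) ∂γ = ∫ z, f z ∂γ := by
    have h1 : ∫ z, f z ∂(γ.map (fun x : ℝ => -x)) = ∫ z, f (-z) ∂γ :=
      integral_map measurable_neg.aemeasurable
        (by rw [hγ, gaussianReal_map_neg]; exact hfmeas.aestronglyMeasurable)
    rw [← h1, hγ, gaussianReal_map_neg]
  -- the symmetrized integrand
  set D : ℝ → ℝ := fun z => f z + f (-z) with hD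
  have hDint : Integrable D γ := hfint.add hfnegint
  have hDz : ∀ z, 0 < z → 0 < D z := by
    intro z hz
    have := pointwise_lt S hS c hc hb hab hz
    simp only [hD, hf, hGi, hGj]
    linarith
  have hDzero : D 0 = 0 := by
    simp only [hD, hf, hGi, hGj, neg_zero, mul_zero, zero_div, zero_mul]
    ring
  have hDsymm : ∀ z, D (-z) = D z := by
    intro z
    simp only [hD, neg_neg]
    ring
  have hDnn : ∀ z, 0 ≤ D z := by
    intro z
    rcases lt_trichotomy z 0 with h | h | h
    · rw [← hDsymm z] at *
      exact (hDz (-z) (by linarith)).le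
    · rw [h, hDzero]
    · exact (hDz z h).le
  have hpos : 0 < ∫ z, D z ∂γ := by
    rw [integral_pos_iff_support_of_nonneg_ae (ae_of_all _ hDnn) hDint]
    have hsub : Set.Ioi (0:ℝ) ⊆ Function.support D := fun z hz => (hDz z hz).ne'
    refine lt_of_lt_of_le ?_ (measure_mono hsub)
    exact gaussianReal_pos_of_volume_pos (s := Set.Ioi (0:ℝ)) (by simp)
  have hsplit : ∫ z, D z ∂γ = 2 * ∫ z, f z ∂γ := by
    rw [hD]
    rw [integral_add hfint hfnegint, hsym]
    ring
  have : 0 < ∫ z, f z ∂γ := by linarith [hsplit ▸ hpos]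
  have hsub : ∫ z, f z ∂γ = (∫ z, Gj z ∂γ) - ∫ z, Gi z ∂γ := integral_sub hGjint hGiint
  simp only [hGj, hGi] at hsub ⊢
  linarith [hsub ▸ this]


lemma measure_winner_eq {n : ℕ} (P : Measure Ω) [IsProbabilityMeasure P]
    (Z : Fin (n+1) → Ω → ℝ) (measZ : ∀ i, Measurable (Z i))
    (indepZ : iIndepFun Z P)
    (gaussZ : ∀ i, Measure.map (Z i) P = gaussianReal 0 1)
    (s : Fin (n+1) → ℝ) (hs : ∀ k, 0 < s k) (i : Fin (n+1)) :
    (P {ω | ∀ k, Z k ω / s k ≤ Z i ω / s i}).toReal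
      = ∫ z, ∏ k ∈ Finset.univ.erase i, gaussCDF (s k * z / s i) ∂(gaussianReal 0 1) := by
  set γ := gaussianReal 0 1 with hγ
  set T : Ω → (Fin (n+1) → ℝ) := fun ω k => Z k ω with hT
  have hTmeas : Measurable T := measurable_pi_lambda _ measZ
  -- joint law is the product gaussian
  have hjoint : Measure.map T P = Measure.pi (fun _ : Fin (n+1) => γ) := by
    refine (Measure.pi_eq fun sets hsets => ?_).symm
    rw [Measure.map_apply hTmeas (MeasurableSet.univ_pi hsets)]
    have hpre : T ⁻¹' Set.pi Set.univ sets = ⋂ k, Z k ⁻¹' sets k := by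
      ext ω
      simp [hT, Set.mem_pi]
    rw [hpre, indepZ.meas_iInter (fun k => ⟨sets k, hsets k, rfl⟩)]
    exact Finset.prod_congr rfl fun k _ => by
      rw [← gaussZ k, Measure.map_apply (measZ k) (hsets k)]
  -- the winner set
  set Si : Set (Fin (n+1) → ℝ) := {y | ∀ k, y k / s k ≤ y i / s i} with hSi
  have hSimeas : MeasurableSet Si := by
    have : Si = ⋂ k, {y : Fin (n+1) → ℝ | y k / s k ≤ y i / s i} := by
      ext y
      simp [hSi, Set.mem_iInter]
    rw [this]
    exact MeasurableSet.iInter fun k => measurableSet_le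
      ((measurable_pi_apply k).div_const _) ((measurable_pi_apply i).div_const _)
  have hPev : P {ω | ∀ k, Z k ω / s k ≤ Z i ω / s i}
      = Measure.pi (fun _ : Fin (n+1) => γ) Si := by
    rw [← hjoint, Measure.map_apply hTmeas hSimeas]
    rfl
  -- split off coordinate i
  have hmp := measurePreserving_piFinSuccAbove (fun _ : Fin (n+1) => γ) i
  set T' : Set (ℝ × (Fin n → ℝ)) :=
    {p | ∀ m, p.2 m ≤ s (i.succAbove m) * p.1 / s i} with hT'
  have hT'meas : MeasurableSet T' := by
    have : T' = ⋂ m, {p : ℝ × (Fin n → ℝ) | p.2 m ≤ s (i.succAbove m) * p.1 / s i} := by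
      ext p
      simp [hT', Set.mem_iInter]
    rw [this]
    exact MeasurableSet.iInter fun m => measurableSet_le
      (measurable_snd.eval)
      ((measurable_fst.const_mul _).div_const _)
  have hiff : ∀ (u v : ℝ) (k : Fin (n+1)), u / s k ≤ v / s i ↔ u ≤ s k * v / s i := by
    intro u v k
    rw [div_le_div_iff₀ (hs k) (hs i), le_div_iff₀ (hs i), mul_comm v (s k)]
  have himg : Si = (MeasurableEquiv.piFinSuccAbove (fun _ : Fin (n+1) => ℝ) i) ⁻¹' T' := by
    ext y
    simp only [hSi, Set.mem_setOf_eq, Set.mem_preimage,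
      MeasurableEquiv.piFinSuccAbove_apply, hT', Fin.removeNth]
    rw [Fin.forall_iff_succAbove i]
    simp only [le_refl, true_and]
    exact forall_congr' fun m => hiff _ _ _
  have hmeasval : Measure.pi (fun _ : Fin (n+1) => γ) Si
      = (γ.prod (Measure.pi fun _ : Fin n => γ)) T' := by
    rw [himg]
    exact hmp.measure_preimage_equiv T'
  -- Fubini
  have hprodval : (γ.prod (Measure.pi fun _ : Fin n => γ)) T'
      = ∫⁻ z, ∏ m, γ (Set.Iic (s (i.succAbove m) * z / s i)) ∂γ := by
    rw [Measure.prod_apply hT'meas]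
    refine lintegral_congr fun z => ?_
    have : (Prod.mk z ⁻¹' T')
        = Set.pi Set.univ (fun m => Set.Iic (s (i.succAbove m) * z / s i)) := by
      ext v
      simp [hT', Set.mem_pi, Pi.le_def]
    rw [this, Measure.pi_pi]
  -- convert lintegral to Bochner integral
  have hmonom : ∀ m : Fin n, Measurable fun z : ℝ =>
      γ (Set.Iic (s (i.succAbove m) * z / s i)) := by
    intro m
    have hmono : Monotone fun z : ℝ => γ (Set.Iic (s (i.succAbove m) * z / s i)) := by
      intro u v huv
      refine measure_mono (Set.Iic_subset_Iic.2 ?_)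
      exact (div_le_div_iff_of_pos_right (hs i)).2 (mul_le_mul_of_nonneg_left huv (hs _).le)
    exact hmono.measurable
  have hfmeas : Measurable fun z : ℝ => ∏ m, γ (Set.Iic (s (i.succAbove m) * z / s i)) :=
    Finset.measurable_prod _ fun m _ => hmonom m
  have hfle : ∀ z : ℝ, (∏ m, γ (Set.Iic (s (i.succAbove m) * z / s i))) ≤ 1 :=
    fun z => Finset.prod_le_one (fun _ _ => zero_le) (fun _ _ => prob_le_one)
  have hlint : (∫⁻ z, ∏ m, γ (Set.Iic (s (i.succAbove m) * z / s i)) ∂γ).toReal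
      = ∫ z, ∏ m, gaussCDF (s (i.succAbove m) * z / s i) ∂γ := by
    rw [← integral_toReal hfmeas.aemeasurable
      (ae_of_all _ fun z => lt_of_le_of_lt (hfle z) ENNReal.one_lt_top)]
    refine integral_congr_ae (ae_of_all _ fun z => ?_)
    simp only [ENNReal.toReal_prod]
    rfl
  -- reindex the product
  have hre : ∀ z : ℝ, ∏ m, gaussCDF (s (i.succAbove m) * z / s i)
      = ∏ k ∈ Finset.univ.erase i, gaussCDF (s k * z / s i) := by
    intro z
    have h1 := Fin.prod_univ_succAbove (fun k => gaussCDF (s k * z / s i)) i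
    have h2 := Finset.mul_prod_erase Finset.univ
      (fun k => gaussCDF (s k * z / s i)) (Finset.mem_univ i)
    exact (mul_left_cancel₀ (gaussCDF_pos (s i * z / s i)).ne' (h2.trans h1)).symm
  rw [hPev, hmeasval, hprodval, hlint]
  exact integral_congr_ae (ae_of_all _ fun z => hre z)



/-- **Lemma (monotonicity of the pure-noise winner map).**
Let `r ≥ 3`, let `x` lie in the interior of the simplex `Δ_r`, and let `Z_1,…,Z_r` be i.i.d.
standard normals. With `U_i(x) = Z_i/√(x_i)` and `g_i(x) = P(U_i(x) = max_j U_j(x))`,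
if `x_i > x_j` for distinct `i ≠ j`, then `g_i(x) < g_j(x)`. -/
theorem winner_map_monotone
    {r : ℕ} (hr : 3 ≤ r) (P : Measure Ω) [IsProbabilityMeasure P]
    (Z : Fin r → Ω → ℝ) (measZ : ∀ i, Measurable (Z i))
    (indepZ : iIndepFun Z P)
    (gaussZ : ∀ i, Measure.map (Z i) P = gaussianReal 0 1)
    (x : Fin r → ℝ) (hxpos : ∀ i, 0 < x i) (hxsum : ∑ i, x i = 1)
    (i j : Fin r) (hij : i ≠ j) (hx : x j < x i) :
    (P {ω | ∀ k, Z k ω / Real.sqrt (x k) ≤ Z i ω / Real.sqrt (x i)}).toReal <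
      (P {ω | ∀ k, Z k ω / Real.sqrt (x k) ≤ Z j ω / Real.sqrt (x j)}).toReal := by
  obtain ⟨n, rfl⟩ : ∃ n, r = n + 1 := ⟨r - 1, by omega⟩
  have hs : ∀ k : Fin (n+1), 0 < Real.sqrt (x k) := fun k => Real.sqrt_pos.2 (hxpos k)
  rw [measure_winner_eq P Z measZ indepZ gaussZ _ hs i,
    measure_winner_eq P Z measZ indepZ gaussZ _ hs j]
  have hji : j ∈ Finset.univ.erase i := Finset.mem_erase.2 ⟨Ne.symm hij, Finset.mem_univ j⟩
  have hij' : i ∈ Finset.univ.erase j := Finset.mem_erase.2 ⟨hij, Finset.mem_univ i⟩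
  have e1 : (fun z => ∏ k ∈ Finset.univ.erase i,
        gaussCDF (Real.sqrt (x k) * z / Real.sqrt (x i)))
      = fun z => gaussCDF (Real.sqrt (x j) * z / Real.sqrt (x i))
          * ∏ k ∈ (Finset.univ.erase i).erase j,
              gaussCDF (Real.sqrt (x k) * z / Real.sqrt (x i)) :=
    funext fun z => (Finset.mul_prod_erase _ _ hji).symm
  have e2 : (fun z => ∏ k ∈ Finset.univ.erase j,
        gaussCDF (Real.sqrt (x k) * z / Real.sqrt (x j)))
      = fun z => gaussCDF (Real.sqrt (x i) * z / Real.sqrt (x j))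
          * ∏ k ∈ (Finset.univ.erase i).erase j,
              gaussCDF (Real.sqrt (x k) * z / Real.sqrt (x j)) :=
    funext fun z => by
      rw [← Finset.mul_prod_erase _ _ hij', Finset.erase_right_comm]
  rw [e1, e2]
  have hne : ((Finset.univ.erase i).erase j).Nonempty := by
    rw [← Finset.card_pos, Finset.card_erase_of_mem hji,
      Finset.card_erase_of_mem (Finset.mem_univ i), Finset.card_univ, Fintype.card_fin]
    omega
  exact core_lt _ hne (fun k => Real.sqrt (x k)) (fun k _ => hs k) (hs j)
    (Real.sqrt_lt_sqrt (hxpos j).le hx)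


end ThompsonStability
end

section
/- There exists a universal constant c > 0 such that the following holds. Let r ≥ 2, let σ_1,…,σ_r > 0, and define Y_i = σ_i Z_i with i.i.d. standard normal Z_i. Let W_i = Y_i + Δ_i where the Δ_i are (deterministic) perturbations with |Δ_i| ≤ η σ_i for all i and some η ≥ 0. Setting p_i = P(W_i = max_j W_j) and g_i = P(Y_i = max_j Y_j), one has max_i |p_i − g_i| ≤ c r η. -/
open MeasureTheory ProbabilityTheory Filter Real Topology

open scoped Classical

namespace ThompsonStability

variable {Ω : Type} [MeasurableSpace Ω]

lemma gaussianPDFReal_le_half (x : ℝ) : gaussianPDFReal 0 1 x ≤ 1/2 := by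
  rw [gaussianPDFReal]
  simp only [NNReal.coe_one, mul_one, sub_zero]
  have h2 : (2:ℝ) ≤ Real.sqrt (2 * π) := by
    have h4 : Real.sqrt 4 ≤ Real.sqrt (2 * π) := by
      apply Real.sqrt_le_sqrt
      nlinarith [Real.pi_gt_three]
    rw [show (4:ℝ) = 2^2 by norm_num, Real.sqrt_sq (by norm_num : (0:ℝ) ≤ 2)] at h4
    exact h4
  have hexp : rexp (- x^2 / 2) ≤ 1 := by
    rw [Real.exp_le_one_iff]
    nlinarith [sq_nonneg x]
  have hpos : (0:ℝ) < Real.sqrt (2 * π) := by linarith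
  calc (Real.sqrt (2 * π))⁻¹ * rexp (- x^2 / 2)
      ≤ (Real.sqrt (2 * π))⁻¹ * 1 := by
        apply mul_le_mul_of_nonneg_left hexp (by positivity)
    _ ≤ 1/2 := by
        rw [mul_one]
        rw [inv_le_comm₀ (by linarith) (by norm_num)]
        simpa using h2

lemma gauss_Icc_le (a b : ℝ) :
    gaussianReal 0 1 (Set.Icc a b) ≤ ENNReal.ofReal ((b - a) / 2) := by
  rw [gaussianReal_apply 0 one_ne_zero]
  calc ∫⁻ x in Set.Icc a b, gaussianPDF 0 1 x
      ≤ ∫⁻ _ in Set.Icc a b, ENNReal.ofReal (1/2) := by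
        refine setLIntegral_mono measurable_const fun x _ => ?_
        exact ENNReal.ofReal_le_ofReal (gaussianPDFReal_le_half x)
    _ = ENNReal.ofReal (1/2) * volume (Set.Icc a b) := setLIntegral_const _ _
    _ = ENNReal.ofReal (1/2) * ENNReal.ofReal (b - a) := by rw [Real.volume_Icc]
    _ = ENNReal.ofReal ((b - a) / 2) := by
        rw [← ENNReal.ofReal_mul (by norm_num)]
        ring_nf

lemma slice_eq {σ c t : ℝ} (hσ : 0 < σ) :
    {x : ℝ | |σ * x - c| ≤ t} = Set.Icc ((c - t)/σ) ((c + t)/σ) := by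
  ext x
  simp only [Set.mem_setOf_eq, Set.mem_Icc, abs_le, div_le_iff₀ hσ, le_div_iff₀ hσ]
  constructor <;> intro h <;> constructor <;> nlinarith [h.1, h.2]

lemma pair_bound {Ω' : Type} [MeasurableSpace Ω'] (P : Measure Ω') [IsProbabilityMeasure P]
    {X Y : Ω' → ℝ} (hX : Measurable X) (hY : Measurable Y)
    (hXY : IndepFun X Y P)
    (hgX : Measure.map X P = gaussianReal 0 1) (hgY : Measure.map Y P = gaussianReal 0 1)
    {a : ℝ} (b t : ℝ) (ha : 0 < a) :
    P {ω | |a * X ω - b * Y ω| ≤ t} ≤ ENNReal.ofReal (t / a) := by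
  have hmap : Measure.map (fun ω => (Y ω, X ω)) P
      = (gaussianReal 0 1).prod (gaussianReal 0 1) := by
    rw [(indepFun_iff_map_prod_eq_prod_map_map hY.aemeasurable hX.aemeasurable).mp hXY.symm,
      hgX, hgY]
  have hset : MeasurableSet {p : ℝ × ℝ | |a * p.2 - b * p.1| ≤ t} :=
    measurableSet_le ((measurable_snd.const_mul a).sub (measurable_fst.const_mul b)).abs
      measurable_const
  have heq : {ω | |a * X ω - b * Y ω| ≤ t}
      = (fun ω => (Y ω, X ω)) ⁻¹' {p : ℝ × ℝ | |a * p.2 - b * p.1| ≤ t} := rfl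
  rw [heq, ← Measure.map_apply (hY.prodMk hX) hset, hmap, Measure.prod_apply hset]
  have hslice : ∀ z : ℝ,
      gaussianReal 0 1 (Prod.mk z ⁻¹' {p : ℝ × ℝ | |a * p.2 - b * p.1| ≤ t})
        ≤ ENNReal.ofReal (t / a) := by
    intro z
    have h1 : Prod.mk z ⁻¹' {p : ℝ × ℝ | |a * p.2 - b * p.1| ≤ t}
        = {x | |a * x - b * z| ≤ t} := rfl
    rw [h1, slice_eq ha]
    refine le_trans (gauss_Icc_le _ _) (le_of_eq ?_)
    congr 1
    field_simp
    ring
  calc ∫⁻ z, gaussianReal 0 1 (Prod.mk z ⁻¹' {p : ℝ × ℝ | |a * p.2 - b * p.1| ≤ t})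
        ∂(gaussianReal 0 1)
      ≤ ∫⁻ _, ENNReal.ofReal (t / a) ∂(gaussianReal 0 1) := lintegral_mono hslice
    _ = ENNReal.ofReal (t / a) := by simp

/-- **Lemma (winner perturbation).**
There is a universal constant `c > 0` such that: for every `r ≥ 2`, every probability space,
i.i.d. standard normals `Z_1,…,Z_r`, scales `σ_i > 0`, perturbations `Δ_i` with
`|Δ_i| ≤ η σ_i` (`η ≥ 0`), setting `Y_i = σ_i Z_i`, `W_i = Y_i + Δ_i`,
`p_i = P(W_i = max_j W_j)` and `g_i = P(Y_i = max_j Y_j)`, one has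
`max_i |p_i − g_i| ≤ c r η`. -/
theorem winner_perturbation :
    ∃ c : ℝ, 0 < c ∧
      ∀ (r : ℕ), 2 ≤ r →
      ∀ (Ω' : Type) [MeasurableSpace Ω'] (P : Measure Ω'), IsProbabilityMeasure P →
      ∀ (Z : Fin r → Ω' → ℝ), (∀ i, Measurable (Z i)) →
        iIndepFun Z P →
        (∀ i, Measure.map (Z i) P = gaussianReal 0 1) →
      ∀ (σ : Fin r → ℝ), (∀ i, 0 < σ i) →
      ∀ (Δ : Fin r → ℝ) (η : ℝ), 0 ≤ η → (∀ i, |Δ i| ≤ η * σ i) →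
      ∀ i : Fin r,
        |(P {ω | ∀ k, σ k * Z k ω + Δ k ≤ σ i * Z i ω + Δ i}).toReal -
            (P {ω | ∀ k, σ k * Z k ω ≤ σ i * Z i ω}).toReal| ≤ c * r * η := by
  refine ⟨2, by norm_num, ?_⟩
  intro r hr Ω' _ P hP Z hZm hZindep hZgauss σ hσ Δ η hη hΔ i
  set A := {ω | ∀ k, σ k * Z k ω + Δ k ≤ σ i * Z i ω + Δ i} with hA
  set B := {ω | ∀ k, σ k * Z k ω ≤ σ i * Z i ω} with hB
  set E : Fin r → Set Ω' := fun k => {ω | |σ k * Z k ω - σ i * Z i ω| ≤ η * (σ k + σ i)}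
    with hE
  have hEbound : ∀ k ∈ Finset.univ.erase i, P (E k) ≤ ENNReal.ofReal (2 * η) := by
    intro k hk
    have hki : k ≠ i := Finset.ne_of_mem_erase hk
    have hindep := hZindep.indepFun hki
    rcases le_total (σ i) (σ k) with h | h
    · refine le_trans (pair_bound P (hZm k) (hZm i) hindep (hZgauss k) (hZgauss i)
        (σ i) (η * (σ k + σ i)) (hσ k)) ?_
      apply ENNReal.ofReal_le_ofReal
      rw [div_le_iff₀ (hσ k)]
      nlinarith [hσ i, hσ k, mul_le_mul_of_nonneg_left h hη]
    · have hEk : E k = {ω | |σ i * Z i ω - σ k * Z k ω| ≤ η * (σ k + σ i)} := by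
        ext ω
        simp only [hE, Set.mem_setOf_eq, abs_sub_comm]
      rw [hEk]
      refine le_trans (pair_bound P (hZm i) (hZm k) hindep.symm (hZgauss i) (hZgauss k)
        (σ k) (η * (σ k + σ i)) (hσ i)) ?_
      apply ENNReal.ofReal_le_ofReal
      rw [div_le_iff₀ (hσ i)]
      nlinarith [hσ i, hσ k, mul_le_mul_of_nonneg_left h hη]
  have hsub : (A \ B) ∪ (B \ A) ⊆ ⋃ k ∈ Finset.univ.erase i, E k := by
    rintro ω (⟨hAω, hBω⟩ | ⟨hBω, hAω⟩)
    · simp only [hB, Set.mem_setOf_eq, not_forall, not_le] at hBω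
      obtain ⟨k, hk⟩ := hBω
      have hki : k ≠ i := by rintro rfl; exact lt_irrefl _ hk
      refine Set.mem_iUnion₂.mpr ⟨k, Finset.mem_erase.mpr ⟨hki, Finset.mem_univ k⟩, ?_⟩
      have h1 := hAω k
      have h2 := abs_le.mp (hΔ i)
      have h3 := abs_le.mp (hΔ k)
      simp only [hE, Set.mem_setOf_eq]
      rw [abs_le]
      constructor <;> nlinarith [hσ i, hσ k]
    · simp only [hA, Set.mem_setOf_eq, not_forall, not_le] at hAω
      obtain ⟨k, hk⟩ := hAω
      have hki : k ≠ i := by rintro rfl; exact lt_irrefl _ hk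
      refine Set.mem_iUnion₂.mpr ⟨k, Finset.mem_erase.mpr ⟨hki, Finset.mem_univ k⟩, ?_⟩
      have h1 := hBω k
      have h2 := abs_le.mp (hΔ i)
      have h3 := abs_le.mp (hΔ k)
      simp only [hE, Set.mem_setOf_eq]
      rw [abs_le]
      constructor <;> nlinarith [hσ i, hσ k]
  have hPD : P ((A \ B) ∪ (B \ A)) ≤ ENNReal.ofReal (2 * r * η) := by
    refine le_trans (measure_mono hsub) (le_trans (measure_biUnion_finset_le _ _) ?_)
    calc ∑ k ∈ Finset.univ.erase i, P (E k)
        ≤ ∑ _k ∈ Finset.univ.erase i, ENNReal.ofReal (2 * η) := Finset.sum_le_sum hEbound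
      _ = ((Finset.univ.erase i).card : ENNReal) * ENNReal.ofReal (2 * η) := by
          rw [Finset.sum_const, nsmul_eq_mul]
      _ ≤ (r : ENNReal) * ENNReal.ofReal (2 * η) := by
          gcongr
          exact_mod_cast le_trans (Finset.card_erase_le) (by simp)
      _ = ENNReal.ofReal (2 * r * η) := by
          rw [← ENNReal.ofReal_natCast r, ← ENNReal.ofReal_mul (by positivity)]
          congr 1
          ring
  have h1 : P A ≤ P B + P ((A \ B) ∪ (B \ A)) := by
    refine le_trans (measure_mono (fun ω hω => ?_)) (measure_union_le _ _)
    by_cases hb : ω ∈ B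
    · exact Or.inl hb
    · exact Or.inr (Or.inl ⟨hω, hb⟩)
  have h2 : P B ≤ P A + P ((A \ B) ∪ (B \ A)) := by
    refine le_trans (measure_mono (fun ω hω => ?_)) (measure_union_le _ _)
    by_cases ha : ω ∈ A
    · exact Or.inl ha
    · exact Or.inr (Or.inr ⟨hω, ha⟩)
  have hDr : (P ((A \ B) ∪ (B \ A))).toReal ≤ 2 * r * η :=
    ENNReal.toReal_le_of_le_ofReal (by positivity) hPD
  have h1r : (P A).toReal ≤ (P B).toReal + (P ((A \ B) ∪ (B \ A))).toReal := by
    rw [← ENNReal.toReal_add (measure_ne_top _ _) (measure_ne_top _ _)]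
    exact ENNReal.toReal_mono (by finiteness) h1
  have h2r : (P B).toReal ≤ (P A).toReal + (P ((A \ B) ∪ (B \ A))).toReal := by
    rw [← ENNReal.toReal_add (measure_ne_top _ _) (measure_ne_top _ _)]
    exact ENNReal.toReal_mono (by finiteness) h2
  rw [abs_sub_le_iff]
  constructor <;> linarith



end ThompsonStability
end

section
/- Run Thompson sampling with mean bonus on the K-armed Gaussian bandit. For all sufficiently large T, on the good event G_T the following order-flip property holds: for any two optimal arms i, j ∈ S* and any time t ≤ T − 1, if N_{i,t} ≥ (1 + β(𝒜)^{−1/4}) N_{j,t}, then the next-step indices satisfy Υ_{i,t+1} < Υ_{j,t+1}. -/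
open MeasureTheory ProbabilityTheory Filter Real Topology

open scoped Classical

namespace ThompsonStability

variable {Ω : Type} [MeasurableSpace Ω]

lemma pullCount_mono {K : ℕ} (A : ℕ → Ω → Fin K) (a : Fin K) {s t : ℕ} (h : s ≤ t) (ω : Ω) :
    pullCount A a s ω ≤ pullCount A a t ω :=
  Finset.card_le_card (Finset.filter_subset_filter _ (Finset.Icc_subset_Icc_right h))

lemma flip_aux (u e : ℝ) (hu1 : 1 ≤ u) (hu2 : u ^ 2 = 1 + e) (he : e ≤ 1/100) :
    u * e / 4 ≤ u - 1 := by
  have hu32 : u ≤ 3/2 := by nlinarith [sq_nonneg (u - 3/2)]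
  have h4u : (0:ℝ) ≤ 4 - u - u ^ 2 := by nlinarith
  nlinarith [mul_nonneg (sub_nonneg.2 hu1) h4u]

lemma key_ineq (β L ni nj ei ej zi zj : ℝ)
    (hβ : (10:ℝ)^8 ≤ β) (hL : 1 ≤ L) (hnj : 1 ≤ nj)
    (hni : (1 + β ^ (-(1/4:ℝ))) * nj ≤ ni)
    (hei : |ei| ≤ Real.sqrt (L / ni)) (hej : |ej| ≤ Real.sqrt (L / nj))
    (hzi : |zi| ≤ 3 * Real.sqrt L) (hzj : |zj| ≤ 3 * Real.sqrt L) :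
    ei + zi / Real.sqrt ni + Real.sqrt (2 * β * L / ni) <
      ej + zj / Real.sqrt nj + Real.sqrt (2 * β * L / nj) := by
  have hβ0 : (0:ℝ) < β := lt_of_lt_of_le (by norm_num) hβ
  have hL0 : (0:ℝ) < L := by linarith
  obtain ⟨q, hq0, hq4, hq100, hεq⟩ :
      ∃ q : ℝ, 0 < q ∧ q ^ 4 = β ∧ 100 ≤ q ∧ β ^ (-(1/4:ℝ)) = 1 / q := by
    refine ⟨β ^ ((1/4:ℝ)), Real.rpow_pos_of_pos hβ0 _, ?_, ?_, ?_⟩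
    · rw [← Real.rpow_natCast (β ^ ((1/4:ℝ))) 4, ← Real.rpow_mul hβ0.le]
      norm_num
    · have hq4' : (β ^ ((1/4:ℝ))) ^ 4 = β := by
        rw [← Real.rpow_natCast (β ^ ((1/4:ℝ))) 4, ← Real.rpow_mul hβ0.le]
        norm_num
      have h4 : (100:ℝ) ^ 4 ≤ (β ^ ((1/4:ℝ))) ^ 4 := by rw [hq4']; norm_num; linarith
      exact le_of_pow_le_pow_left₀ (by norm_num) (Real.rpow_pos_of_pos hβ0 _).le h4
    · rw [Real.rpow_neg hβ0.le, one_div]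
      norm_num
  rw [hεq] at hni
  obtain ⟨ε, hε0, hε1, hεqmul, hni⟩ :
      ∃ ε : ℝ, 0 < ε ∧ ε ≤ 1/100 ∧ ε * q = 1 ∧ (1 + ε) * nj ≤ ni := by
    refine ⟨1 / q, by positivity, ?_, by field_simp, hni⟩
    rw [div_le_div_iff₀ hq0 (by norm_num)]
    linarith
  clear hεq hβ
  have hni1 : 1 ≤ ni := by nlinarith [mul_le_mul_of_nonneg_left hnj hε0.le]
  have hnji : nj ≤ ni := by nlinarith [mul_le_mul_of_nonneg_left hnj hε0.le]
  set si : ℝ := Real.sqrt ni with hsi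
  set sj : ℝ := Real.sqrt nj with hsjd
  have hsj1 : 1 ≤ sj := by
    have h := Real.sqrt_le_sqrt hnj
    rwa [Real.sqrt_one] at h
  have hsj0 : 0 < sj := by linarith
  have hsi2 : si ^ 2 = ni := Real.sq_sqrt (by linarith)
  have hsj2 : sj ^ 2 = nj := Real.sq_sqrt (by linarith)
  have hsij : sj ≤ si := Real.sqrt_le_sqrt hnji
  have hsi0 : 0 < si := lt_of_lt_of_le hsj0 hsij
  set sL : ℝ := Real.sqrt L with hsLd
  have hsL1 : 1 ≤ sL := by
    have h := Real.sqrt_le_sqrt hL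
    rwa [Real.sqrt_one] at h
  have hsL2 : sL ^ 2 = L := Real.sq_sqrt hL0.le
  set s2L : ℝ := Real.sqrt (2 * L) with hs2Ld
  have hs2L : sL ≤ s2L := Real.sqrt_le_sqrt (by linarith)
  -- rewrite the square roots
  have hdivi : Real.sqrt (L / ni) = sL / si := Real.sqrt_div hL0.le ni
  have hdivj : Real.sqrt (L / nj) = sL / sj := Real.sqrt_div hL0.le nj
  set B : ℝ := Real.sqrt (2 * β * L) with hBd
  have hBi : Real.sqrt (2 * β * L / ni) = B / si := Real.sqrt_div (by positivity) ni
  have hBj : Real.sqrt (2 * β * L / nj) = B / sj := Real.sqrt_div (by positivity) nj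
  have hB : B = q ^ 2 * s2L := by
    rw [hBd, show 2 * β * L = (q ^ 2) ^ 2 * (2 * L) by rw [← hq4]; ring,
      Real.sqrt_mul (by positivity), Real.sqrt_sq (by positivity)]
  -- u = sqrt(1+ε)
  set u : ℝ := Real.sqrt (1 + ε) with hud
  have hu1 : 1 ≤ u := by
    have h := Real.sqrt_le_sqrt (show (1:ℝ) ≤ 1 + ε by linarith)
    rwa [Real.sqrt_one] at h
  have hu0 : 0 < u := by linarith
  have hu2 : u ^ 2 = 1 + ε := Real.sq_sqrt (by linarith)
  have hflip : u * ε / 4 ≤ u - 1 := flip_aux u ε hu1 hu2 hε1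
  -- si ≥ u * sj
  have husj : u * sj ≤ si := by
    have h1 : Real.sqrt ((1 + ε) * nj) ≤ si := Real.sqrt_le_sqrt hni
    rwa [Real.sqrt_mul (by linarith) nj, ← hud, ← hsjd] at h1
  -- gap between B/sj and B/si
  have hB0 : 0 ≤ B := Real.sqrt_nonneg _
  have hBgap : B * ε / (4 * sj) ≤ B / sj - B / si := by
    have h1 : B / si ≤ B / (u * sj) := by
      gcongr
    have h2 : B / sj - B / (u * sj) = B * (u - 1) / (u * sj) := by
      field_simp
    have h3 : B * (u * ε / 4) / (u * sj) ≤ B * (u - 1) / (u * sj) := by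
      gcongr
    have h4 : B * (u * ε / 4) / (u * sj) = B * ε / (4 * sj) := by
      field_simp
    linarith
  have hBe : 100 * s2L ≤ B * ε := by
    rw [hB]
    have : q ^ 2 * s2L * ε = (ε * q) * (q * s2L) := by ring
    rw [this, hεqmul, one_mul]
    exact mul_le_mul_of_nonneg_right hq100 (Real.sqrt_nonneg _)
  have hgap : 8 * sL / sj < B / sj - B / si := by
    have h100 : 100 * sL ≤ B * ε :=
      le_trans (mul_le_mul_of_nonneg_left hs2L (by norm_num)) hBe
    have h25 : 25 * sL / sj ≤ B * ε / (4 * sj) := by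
      rw [show 25 * sL / sj = 100 * sL / (4 * sj) by field_simp; ring]
      gcongr
    have h8 : 8 * sL / sj < 25 * sL / sj :=
      (div_lt_div_iff_of_pos_right hsj0).mpr (by linarith)
    linarith
  -- final combination
  rw [hdivi] at hei
  rw [hdivj] at hej
  rw [hBi, hBj]
  have hsL0 : (0:ℝ) ≤ sL := by linarith
  have b1 : ei ≤ sL / sj := by
    refine le_trans (le_trans (le_abs_self ei) hei) ?_
    gcongr
  have b2 : zi / si ≤ 3 * sL / sj := by
    calc zi / si ≤ (3 * sL) / si := by
          gcongr
          exact le_trans (le_abs_self zi) hzi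
      _ ≤ 3 * sL / sj := by gcongr
  have b3 : -(sL / sj) ≤ ej := by
    have := neg_abs_le ej
    linarith [hej]
  have b4 : -(3 * sL / sj) ≤ zj / sj := by
    have h1 : -(3 * sL) ≤ zj := by have := neg_abs_le zj; linarith
    calc -(3 * sL / sj) = (-(3 * sL)) / sj := by ring
      _ ≤ zj / sj := by gcongr
  clear_value si sj sL s2L B u
  have hgap' : 8 * (sL / sj) < B / sj - B / si := by rw [← mul_div_assoc]; exact hgap
  have b2' : zi / si ≤ 3 * (sL / sj) := by rw [← mul_div_assoc]; exact b2
  have b4' : -(3 * (sL / sj)) ≤ zj / sj := by rw [← mul_div_assoc]; exact b4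
  linarith [hgap', b2', b4', b1, b3]

/-- **Lemma (order flip among optimal arms, mean-bonus TS).**
For Thompson sampling with mean bonus there is a constant `C₁ > 0` such that, for all
sufficiently large `T`, on the good event `G_T` the following holds: for any two optimal
arms `i, j ∈ S*` and any (post-initialization) time `t ≤ T − 1`, if
`N_{i,t} ≥ (1 + β(𝒜)^{-1/4}) N_{j,t}` then `Υ_{i,t+1} < Υ_{j,t+1}`. -/
theorem meanBonus_optimal_order_flip
    {K : ℕ} (hK : 2 ≤ K) (P : Measure Ω) [IsProbabilityMeasure P]
    (μ : Fin K → ℝ) (μstar : ℝ) (hμstar : IsGreatest (Set.range μ) μstar)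
    (βA : ℕ → ℝ) (hβpos : ∀ T, 0 < βA T)
    (hβ1 : Tendsto βA atTop atTop)
    (hβ2 : Tendsto (fun T : ℕ => βA T * Real.log T / T) atTop (𝓝 0))
    (A : ℕ → ℕ → Ω → Fin K) (W : ℕ → ℕ × Fin K × Bool → Ω → ℝ)
    (halg : ∀ T, MeanBonusTS K P μ (βA T) T (A T) (W T)) :
    ∃ C₁ : ℝ, 0 < C₁ ∧ ∀ᶠ T : ℕ in atTop,
      ∀ ω ∈ goodEvent μ (A T) (W T) C₁ T,
      ∀ i j : Fin K, μ i = μstar → μ j = μstar →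
      ∀ t : ℕ, K ≤ t → t ≤ T - 1 →
      (1 + βA T ^ (-(1 / 4 : ℝ))) * (pullCount (A T) j t ω : ℝ) ≤
        (pullCount (A T) i t ω : ℝ) →
      mbIndex μ (W T) (βA T) T (A T) t i ω < mbIndex μ (W T) (βA T) T (A T) t j ω := by
  refine ⟨1, one_pos, ?_⟩
  have hβev : ∀ᶠ T : ℕ in atTop, (10:ℝ)^8 ≤ βA T := hβ1.eventually_ge_atTop _
  filter_upwards [hβev, eventually_ge_atTop 3, eventually_ge_atTop (2*K)]
    with T hβT hT3 hTK
  intro ω hω i j hi hj t hKt htT hpull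
  obtain ⟨hconc, hzb⟩ := hω
  have htT' : t ≤ T := le_trans htT (Nat.sub_le T 1)
  have ht1T : t + 1 ≤ T := by omega
  have hT0 : (0:ℝ) < (T:ℝ) := by
    have : (3:ℝ) ≤ (T:ℝ) := by exact_mod_cast hT3
    linarith
  have hlogT : 1 ≤ Real.log T := by
    rw [Real.le_log_iff_exp_le hT0]
    calc Real.exp 1 ≤ 2.7182818286 := Real.exp_one_lt_d9.le
      _ ≤ (3:ℝ) := by norm_num
      _ ≤ (T:ℝ) := by exact_mod_cast hT3
  -- pull counts at time t are at least 1
  have hpc : ∀ a : Fin K, (1:ℝ) ≤ (pullCount (A T) a t ω : ℝ) := by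
    intro a
    have h1 := (halg T).init ω a
    have h2 := pullCount_mono (A T) a hKt ω
    have : 1 ≤ pullCount (A T) a t ω := by omega
    exact_mod_cast this
  -- bound on the Gaussian draws in terms of √(log T)
  have hK2 : (2:ℝ) ≤ (K:ℝ) := by exact_mod_cast hK
  have hzle : Real.sqrt (2 * Real.log (2 * K * T ^ 3)) ≤ 3 * Real.sqrt (Real.log T) := by
    have h1 : (2 * (K:ℝ) * (T:ℝ) ^ 3) ≤ (T:ℝ) ^ 4 := by
      have h2K : (2 * (K:ℝ)) ≤ (T:ℝ) := by exact_mod_cast hTK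
      calc 2 * (K:ℝ) * (T:ℝ) ^ 3 ≤ (T:ℝ) * (T:ℝ) ^ 3 := by
            apply mul_le_mul_of_nonneg_right h2K (by positivity)
        _ = (T:ℝ) ^ 4 := by ring
    have h2 : Real.log (2 * (K:ℝ) * (T:ℝ) ^ 3) ≤ 4 * Real.log T := by
      calc Real.log (2 * (K:ℝ) * (T:ℝ) ^ 3) ≤ Real.log ((T:ℝ) ^ 4) := by
            apply Real.log_le_log (by positivity) h1
        _ = 4 * Real.log T := by rw [Real.log_pow]; push_cast; ring
    calc Real.sqrt (2 * Real.log (2 * K * T ^ 3))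
        ≤ Real.sqrt (9 * Real.log T) := Real.sqrt_le_sqrt (by linarith)
      _ = 3 * Real.sqrt (Real.log T) := by
          rw [show (9:ℝ) * Real.log T = 3 ^ 2 * Real.log T by norm_num,
            Real.sqrt_mul (by positivity), Real.sqrt_sq (by norm_num)]
  have hzi : |W T (t + 1, i, true) ω| ≤ 3 * Real.sqrt (Real.log T) :=
    le_trans (hzb i (t + 1) ht1T) hzle
  have hzj : |W T (t + 1, j, true) ω| ≤ 3 * Real.sqrt (Real.log T) :=
    le_trans (hzb j (t + 1) ht1T) hzle
  -- concentration for i and j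
  have hei : |empMean (A T) (reward μ (W T)) i t ω - μstar| ≤
      Real.sqrt (Real.log T / (pullCount (A T) i t ω : ℝ)) := by
    have := hconc i t hKt htT'
    rwa [hi, one_mul] at this
  have hej : |empMean (A T) (reward μ (W T)) j t ω - μstar| ≤
      Real.sqrt (Real.log T / (pullCount (A T) j t ω : ℝ)) := by
    have := hconc j t hKt htT'
    rwa [hj, one_mul] at this
  have key := key_ineq (βA T) (Real.log T) (pullCount (A T) i t ω : ℝ)
    (pullCount (A T) j t ω : ℝ)
    (empMean (A T) (reward μ (W T)) i t ω - μstar)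
    (empMean (A T) (reward μ (W T)) j t ω - μstar)
    (W T (t + 1, i, true) ω) (W T (t + 1, j, true) ω)
    hβT hlogT (hpc j) hpull hei hej hzi hzj
  unfold mbIndex
  linarith

end ThompsonStability
end
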